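/- Let X be a locally compact Hausdorff zero-dimensional space. Then the image X̂ of the canonical embedding x ↦ x̂ of X into the compact space S(CO(X)) is an open subset of S(CO(X)). -/

import Mathlib

open TopologicalSpace

def sA {A : Type*} [BooleanAlgebra A] (a : A) : Set (BoundedLatticeHom A Bool) :=
  {x | x a = true}

instance stoneTopology (A : Type*) [BooleanAlgebra A] :
    TopologicalSpace (BoundedLatticeHom A Bool) :=
  TopologicalSpace.generateFrom (Set.range (sA (A := A)))

/-- for a locally compact Hausdorff zero-dimensional space `X`, the image `X̂`
of the canonical embedding of `X` into `S(CO(X))` is an open subset of `S(CO(X))`. -/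
theorem stmt8 {X : Type*} [TopologicalSpace X] [T2Space X] [LocallyCompactSpace X]
    (hzd : ∀ (x : X) (U : Set X), IsOpen U → x ∈ U →
      ∃ V : Set X, IsClopen V ∧ x ∈ V ∧ V ⊆ U)
    (h : X → BoundedLatticeHom (Clopens X) Bool)
    (hh : ∀ (x : X) (U : Clopens X), h x U = true ↔ x ∈ U) :
    IsOpen (Set.range h) := by
  rw [isOpen_iff_forall_mem_open]
  rintro φ ⟨x, rfl⟩
  -- get a compact neighborhood of x
  obtain ⟨K', hK'comp, hK'mem⟩ := exists_compact_mem_nhds x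
  obtain ⟨V, hVclopen, hxV, hVsub⟩ :=
    hzd x (interior K') isOpen_interior (mem_interior_iff_mem_nhds.mpr hK'mem)
  have hVcomp : IsCompact V :=
    hK'comp.of_isClosed_subset hVclopen.isClosed (hVsub.trans interior_subset)
  set K : Clopens X := ⟨V, hVclopen⟩ with hKdef
  refine ⟨sA K, ?_, ?_, ?_⟩
  · -- sA K ⊆ range h
    rintro ψ (hψK : ψ K = true)
    -- the family of clopens mapped to true, intersected with V, has FIP
    have key : (V ∩ ⋂ W : {W : Clopens X // ψ W = true}, (W.1 : Set X)).Nonempty := by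
      apply hVcomp.inter_iInter_nonempty
      · exact fun W => W.1.isClopen.isClosed
      · intro t
        classical
        have htrue : ψ (K ⊓ t.inf (fun W => W.1)) = true := by
          rw [map_inf, hψK, map_finset_inf]
          have : (t.inf (⇑ψ ∘ fun W => W.1)) = ⊤ :=
            (Finset.inf_eq_top_iff _ _).mpr fun W _ => W.2
          rw [this]
          rfl
        have hne : (K ⊓ t.inf (fun W => W.1)) ≠ ⊥ := by
          intro hbot
          rw [hbot, map_bot] at htrue
          simp at htrue
        obtain ⟨y, hy⟩ := Set.nonempty_iff_ne_empty.mpr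
          (fun hemp => hne (SetLike.ext' (by simpa using hemp)))
        refine ⟨y, ?_⟩
        have h2 : (↑(t.inf fun W => W.1) : Set X) = ⋂ W ∈ t, (W.1 : Set X) := by
          have h3 := map_finset_inf (⟨⟨((↑) : Clopens X → Set X), Clopens.coe_inf⟩,
            Clopens.coe_top⟩ : InfTopHom (Clopens X) (Set X)) t (fun W => W.1)
          exact h3.trans (Finset.inf_set_eq_iInter _ _)
        exact ⟨hy.1, h2 ▸ hy.2⟩
    obtain ⟨y, hyV, hyI⟩ := key
    simp only [Set.mem_iInter] at hyI
    refine ⟨y, ?_⟩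
    apply DFunLike.ext
    intro U
    cases hU : ψ U with
    | true =>
      have : y ∈ (U : Set X) := hyI ⟨U, hU⟩
      rw [(hh y U).mpr this]
    | false =>
      have hcompl : ψ Uᶜ = true := by
        have := map_top ψ
        rw [← sup_compl_eq_top (x := U), map_sup, hU] at this
        simpa using this
      have : y ∈ (Uᶜ : Clopens X) := hyI ⟨Uᶜ, hcompl⟩
      have hyU : y ∉ (U : Set X) := by
        have h' : y ∈ ((Uᶜ : Clopens X) : Set X) := this
        rw [Clopens.coe_compl] at h'
        exact h'
      cases hhy : h y U with
      | true => exact absurd ((hh y U).mp hhy) hyU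
      | false => rfl
  · exact TopologicalSpace.GenerateOpen.basic _ ⟨K, rfl⟩
  · exact (hh x K).mpr hxV
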